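/- Let O ⊆ ℝ^d be open with closure F. Suppose f_n : ℝ≥0 → ℝ^d converges uniformly on compacts to a continuous f, and suppose the hitting times of f satisfy T_O = T_F < ∞. Then both T^n_O and T^n_F converge to T_O = T_F as n → ∞. -/

import Mathlib

open Filter MeasureTheory Set

/-- Hitting time of a set `S` by a path `f : ℝ≥0 → E`, valued in `[0,∞]`
(with `inf ∅ = ∞`). -/
noncomputable def hitTime {E : Type*} (f : NNReal → E) (S : Set E) : ENNReal :=
  sInf ((fun t : NNReal => (t : ENNReal)) '' {t | f t ∈ S})

/-- If `fₙ → f` uniformly on compacts, `f` is continuous, `O` is open and the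
hitting times of `O` and of its closure by `f` agree and are finite, then both
`Tⁿ_O` and `Tⁿ_{closure O}` converge to `T_O = T_{closure O}`. -/
theorem stmt1 {d : ℕ} (O : Set (EuclideanSpace ℝ (Fin d))) (hO : IsOpen O)
    (fn : ℕ → NNReal → EuclideanSpace ℝ (Fin d))
    (f : NNReal → EuclideanSpace ℝ (Fin d))
    (hf : Continuous f)
    (hconv : ∀ T : NNReal, 0 < T →
      TendstoUniformlyOn (fun n t => fn n t) f atTop (Set.Iic T))
    (heq : hitTime f O = hitTime f (closure O))
    (hfin : hitTime f O < ⊤) :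
    Tendsto (fun n => hitTime (fn n) O) atTop (nhds (hitTime f O)) ∧
      Tendsto (fun n => hitTime (fn n) (closure O)) atTop (nhds (hitTime f O)) := by
  have hmono : ∀ n, hitTime (fn n) (closure O) ≤ hitTime (fn n) O := fun n =>
    sInf_le_sInf (image_mono fun t ht => subset_closure ht)
  -- upper bound
  have hupper : ∀ a, hitTime f O < a → ∀ᶠ n in atTop, hitTime (fn n) O < a := by
    intro a ha
    have ha' : sInf ((fun t : NNReal => (t : ENNReal)) '' {t | f t ∈ O}) < a := ha
    obtain ⟨x, hx, hxa⟩ := sInf_lt_iff.1 ha'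
    obtain ⟨t, ht, rfl⟩ := hx
    have hpt : Tendsto (fun n => fn n t) atTop (nhds (f t)) :=
      (hconv (t + 1) (zero_lt_one.trans_le le_add_self)).tendsto_at
        (mem_Iic.2 le_self_add)
    filter_upwards [hpt.eventually (hO.mem_nhds ht)] with n hn
    calc hitTime (fn n) O ≤ (t : ENNReal) := sInf_le ⟨t, hn, rfl⟩
      _ < a := hxa
  -- lower bound
  have hlower : ∀ a, a < hitTime f O →
      ∀ᶠ n in atTop, a < hitTime (fn n) (closure O) := by
    intro a ha
    obtain ⟨c, hac, hcT⟩ := exists_between ha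
    have hcfin : c ≠ ⊤ := (hcT.trans hfin).ne
    have hc0 : c ≠ 0 := ((zero_le).trans_lt hac).ne'
    set b := c.toNNReal with hb
    have hbc : (b : ENNReal) = c := ENNReal.coe_toNNReal hcfin
    have hbpos : 0 < b := ENNReal.toNNReal_pos hc0 hcfin
    have hnot : ∀ t : NNReal, t ≤ b → f t ∉ closure O := by
      intro t htb hmem
      have h1 : hitTime f (closure O) ≤ (t : ENNReal) := sInf_le ⟨t, hmem, rfl⟩
      have h2 : (t : ENNReal) ≤ c := hbc ▸ ENNReal.coe_le_coe.2 htb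
      exact absurd (h1.trans h2) (not_le.2 (heq ▸ hcT))
    have hK : IsCompact (f '' Icc 0 b) := isCompact_Icc.image hf
    have hKsub : f '' Icc 0 b ⊆ (closure O)ᶜ := by
      rintro x ⟨t, ⟨_, htb⟩, rfl⟩
      exact hnot t htb
    obtain ⟨δ, hδ, hthick⟩ :=
      hK.exists_thickening_subset_open isClosed_closure.isOpen_compl hKsub
    have huc := (Metric.tendstoUniformlyOn_iff.1 (hconv b hbpos)) δ hδ
    filter_upwards [huc] with n hn
    have hge : (b : ENNReal) ≤ hitTime (fn n) (closure O) := by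
      refine le_sInf ?_
      rintro x ⟨t, ht, rfl⟩
      by_contra hlt
      push_neg at hlt
      have htb : t ≤ b := by exact_mod_cast hlt.le
      have hmem : fn n t ∈ Metric.thickening δ (f '' Icc 0 b) :=
        Metric.mem_thickening_iff.2
          ⟨f t, ⟨t, ⟨zero_le, htb⟩, rfl⟩, by rw [dist_comm]; exact hn t htb⟩
      exact hthick hmem ht
    exact lt_of_lt_of_le (hbc ▸ hac) hge
  constructor
  · refine tendsto_order.2 ⟨fun a ha => ?_, fun a ha => hupper a ha⟩
    filter_upwards [hlower a ha] with n hn using lt_of_lt_of_le hn (hmono n)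
  · refine tendsto_order.2 ⟨fun a ha => hlower a ha, fun a ha => ?_⟩
    filter_upwards [hupper a ha] with n hn using lt_of_le_of_lt (hmono n) hn
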